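/- Let ρ be a compactly supported absolutely continuous probability measure on ℝ. If ε_n → 0⁺ and ψⁿ → ψ in ℝ^N, then for every i ∈ {1,…,N}, the regularized mass G^{ε_n}_i(ψⁿ) = ∫_{Lag_i(ψⁿ)} min(√(max(ψⁿ_i − (x−y_i)², 0))/ε_n, 1) ρ(x) dx converges to ρ(Lag_i(ψ) ∩ {x : (x−y_i)² ≤ ψ_i}), the ρ-mass of the i-th restricted Laguerre cell of ψ. -/

import Mathlib

open MeasureTheory Real Filter Set

noncomputable section

/-- The (unrestricted) one-dimensional Laguerre cell of index `i`. -/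
def Lag1 {N : ℕ} (y ψ : Fin N → ℝ) (i : Fin N) : Set ℝ :=
  {x : ℝ | ∀ j, (x - y i) ^ 2 - ψ i ≤ (x - y j) ^ 2 - ψ j}

/-- The regularized mass of the `i`-th Laguerre cell,
`G^ε_i(ψ) = ∫_{Lag_i(ψ)} min(√(max(ψ_i − (x−y_i)², 0))/ε, 1) ρ(x) dx`. -/
def Greg {N : ℕ} (y : Fin N → ℝ) (f : ℝ → ℝ) (ε : ℝ) (ψ : Fin N → ℝ) (i : Fin N) : ℝ :=
  ∫ x in Lag1 y ψ i, min (Real.sqrt (max (ψ i - (x - y i) ^ 2) 0) / ε) 1 * f x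

/-- if `ε_n → 0⁺` and `ψⁿ → ψ`, then the regularized masses
`G^{ε_n}_i(ψⁿ)` converge to the `ρ`-mass of the `i`-th restricted Laguerre cell of `ψ`. -/
theorem stmt10 {N : ℕ} (hN : 0 < N)
    (f : ℝ → ℝ) (hfm : Measurable f) (hf0 : ∀ x, 0 ≤ f x)
    (hfc : HasCompactSupport f) (hfi : ∫ x, f x = 1)
    (y : Fin N → ℝ) (hy : StrictMono y)
    (ε : ℕ → ℝ) (hε : ∀ n, 0 < ε n) (hε0 : Filter.Tendsto ε Filter.atTop (nhds 0))
    (ψn : ℕ → Fin N → ℝ) (ψ : Fin N → ℝ)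
    (hψ : Filter.Tendsto ψn Filter.atTop (nhds ψ)) :
    ∀ i : Fin N,
      Filter.Tendsto (fun n => Greg y f (ε n) (ψn n) i) Filter.atTop
        (nhds (∫ x in Lag1 y ψ i ∩ {x : ℝ | (x - y i) ^ 2 ≤ ψ i}, f x)) := by
  have hfint : Integrable f := by
    by_contra h
    rw [MeasureTheory.integral_undef h] at hfi
    norm_num at hfi
  intro i
  have hcomp : ∀ j, Tendsto (fun n => ψn n j) atTop (nhds (ψ j)) :=
    fun j => tendsto_pi_nhds.mp hψ j
  have hLag : ∀ ψ' : Fin N → ℝ, MeasurableSet (Lag1 y ψ' i) := by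
    intro ψ'
    have h : Lag1 y ψ' i = ⋂ j, {x : ℝ | (x - y i) ^ 2 - ψ' i ≤ (x - y j) ^ 2 - ψ' j} := by
      ext x; simp [Lag1, Set.mem_iInter]
    rw [h]
    exact MeasurableSet.iInter fun j => measurableSet_le (by fun_prop) (by fun_prop)
  set F : ℕ → ℝ → ℝ := fun n => (Lag1 y (ψn n) i).indicator
      (fun x => min (Real.sqrt (max (ψn n i - (x - y i) ^ 2) 0) / ε n) 1 * f x) with hF
  set L : ℝ → ℝ := (Lag1 y ψ i ∩ {x : ℝ | (x - y i) ^ 2 ≤ ψ i}).indicator f with hL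
  have hGr : ∀ n, Greg y f (ε n) (ψn n) i = ∫ x, F n x := by
    intro n
    rw [hF, Greg, MeasureTheory.integral_indicator (hLag (ψn n))]
  have hm2 : MeasurableSet {x : ℝ | (x - y i) ^ 2 ≤ ψ i} :=
    measurableSet_le (by fun_prop) measurable_const
  have hLint : (∫ x in Lag1 y ψ i ∩ {x : ℝ | (x - y i) ^ 2 ≤ ψ i}, f x) = ∫ x, L x := by
    rw [hL, MeasureTheory.integral_indicator ((hLag ψ).inter hm2)]
  simp only [hGr]
  rw [hLint]
  apply MeasureTheory.tendsto_integral_of_dominated_convergence f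
  · intro n
    exact (((Measurable.min (by fun_prop) measurable_const).mul hfm).indicator
      (hLag (ψn n))).aestronglyMeasurable
  · exact hfint
  · intro n
    filter_upwards with x
    by_cases hx : x ∈ Lag1 y (ψn n) i
    · rw [hF]
      simp only [Set.indicator_of_mem hx]
      have h0 : 0 ≤ min (Real.sqrt (max (ψn n i - (x - y i) ^ 2) 0) / ε n) 1 :=
        le_min (div_nonneg (Real.sqrt_nonneg _) (hε n).le) zero_le_one
      rw [Real.norm_eq_abs, abs_of_nonneg (mul_nonneg h0 (hf0 x))]
      calc min (Real.sqrt (max (ψn n i - (x - y i) ^ 2) 0) / ε n) 1 * f x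
          ≤ 1 * f x := mul_le_mul_of_nonneg_right (min_le_right _ _) (hf0 x)
        _ = f x := one_mul _
    · rw [hF]
      simp only [Set.indicator_of_notMem hx]
      simpa using hf0 x
  · -- a.e. pointwise convergence
    have hbad0 : ({x : ℝ | (x - y i) ^ 2 = ψ i}).Finite := by
      apply Set.Finite.subset (Set.toFinite {y i + Real.sqrt (ψ i), y i - Real.sqrt (ψ i)})
      intro x hx
      simp only [Set.mem_setOf_eq] at hx
      have h1 : |x - y i| = Real.sqrt (ψ i) := by
        rw [← hx, Real.sqrt_sq_eq_abs]
      simp only [Set.mem_insert_iff, Set.mem_singleton_iff]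
      rcases (abs_eq (Real.sqrt_nonneg (ψ i))).mp h1 with h | h
      · exact Or.inl (by linarith)
      · exact Or.inr (by linarith)
    have hbad : ∀ j : Fin N, j ≠ i →
        ({x : ℝ | (x - y i) ^ 2 - ψ i = (x - y j) ^ 2 - ψ j}).Finite := by
      intro j hj
      apply Set.Subsingleton.finite
      intro a ha b hb
      simp only [Set.mem_setOf_eq] at ha hb
      have hyij : y j - y i ≠ 0 := sub_ne_zero.mpr fun h => hj (hy.injective h)
      have h2 : 2 * (y j - y i) * (a - b) = 0 := by linear_combination ha - hb
      have h3 : a - b = 0 := by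
        rcases mul_eq_zero.mp h2 with h | h
        · rcases mul_eq_zero.mp h with h' | h'
          · norm_num at h'
          · exact absurd h' hyij
        · exact h
      linarith
    set S : Set ℝ := {x : ℝ | (x - y i) ^ 2 = ψ i} ∪
      ⋃ j ∈ {j : Fin N | j ≠ i}, {x : ℝ | (x - y i) ^ 2 - ψ i = (x - y j) ^ 2 - ψ j} with hS
    have hSfin : S.Finite :=
      hbad0.union (Set.Finite.biUnion (Set.toFinite _) fun j hj => hbad j hj)
    have hS0 : (volume : Measure ℝ) S = 0 := hSfin.measure_zero _
    have hae : ∀ᵐ x : ℝ, x ∉ S := (MeasureTheory.measure_eq_zero_iff_ae_notMem).mp hS0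
    filter_upwards [hae] with x hxS
    have hne0 : (x - y i) ^ 2 ≠ ψ i := by
      intro h; exact hxS (Or.inl h)
    have hnej : ∀ j : Fin N, j ≠ i →
        (x - y i) ^ 2 - ψ i ≠ (x - y j) ^ 2 - ψ j := by
      intro j hj h
      exact hxS (Or.inr (Set.mem_biUnion hj h))
    by_cases hxL : x ∈ Lag1 y ψ i
    · rcases lt_or_gt_of_ne hne0 with hlt | hgt
      · -- case (a): eventually F n x = f x
        have hLx : L x = f x := Set.indicator_of_mem (Set.mem_inter hxL (show x ∈ {x : ℝ | (x - y i) ^ 2 ≤ ψ i} from hlt.le)) f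
        rw [hLx]
        have hmem : ∀ᶠ n in atTop, ∀ j, (x - y i) ^ 2 - ψn n i ≤ (x - y j) ^ 2 - ψn n j := by
          rw [eventually_all]
          intro j
          by_cases hji : j = i
          · subst hji; filter_upwards with n; exact le_refl _
          · have hltj : (x - y i) ^ 2 - ψ i < (x - y j) ^ 2 - ψ j :=
              lt_of_le_of_ne (hxL j) (hnej j hji)
            have ht : Tendsto
                (fun n => ((x - y j) ^ 2 - ψn n j) - ((x - y i) ^ 2 - ψn n i)) atTop
                (nhds (((x - y j) ^ 2 - ψ j) - ((x - y i) ^ 2 - ψ i))) :=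
              (tendsto_const_nhds.sub (hcomp j)).sub (tendsto_const_nhds.sub (hcomp i))
            have hpos : (0:ℝ) < ((x - y j) ^ 2 - ψ j) - ((x - y i) ^ 2 - ψ i) := by linarith
            filter_upwards [ht.eventually (eventually_gt_nhds hpos)] with n hn
            linarith
        have hc2 : (0:ℝ) < (ψ i - (x - y i) ^ 2) / 2 := by linarith
        have h1 : ∀ᶠ n in atTop, (ψ i - (x - y i) ^ 2) / 2 < ψn n i - (x - y i) ^ 2 := by
          have ht : Tendsto (fun n => ψn n i - (x - y i) ^ 2) atTop
              (nhds (ψ i - (x - y i) ^ 2)) := (hcomp i).sub tendsto_const_nhds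
          have hpos : (ψ i - (x - y i) ^ 2) / 2 < ψ i - (x - y i) ^ 2 := by linarith
          exact ht.eventually (eventually_gt_nhds hpos)
        have h2 : ∀ᶠ n in atTop, ε n < Real.sqrt ((ψ i - (x - y i) ^ 2) / 2) :=
          hε0.eventually (eventually_lt_nhds (Real.sqrt_pos.mpr hc2))
        have heq : (fun _ : ℕ => f x) =ᶠ[atTop] fun n => F n x := by
          filter_upwards [hmem, h1, h2] with n hmn h1n h2n
          have hxmem : x ∈ Lag1 y (ψn n) i := hmn
          rw [hF]
          simp only [Set.indicator_of_mem hxmem]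
          have hs : Real.sqrt ((ψ i - (x - y i) ^ 2) / 2) ≤
              Real.sqrt (max (ψn n i - (x - y i) ^ 2) 0) :=
            Real.sqrt_le_sqrt (le_max_of_le_left h1n.le)
          have hone : (1:ℝ) ≤ Real.sqrt (max (ψn n i - (x - y i) ^ 2) 0) / ε n :=
            (one_le_div (hε n)).mpr (le_trans h2n.le hs)
          rw [min_eq_right hone, one_mul]
        exact tendsto_const_nhds.congr' heq
      · -- case (b): eventually F n x = 0
        have hLx : L x = 0 :=
          Set.indicator_of_notMem (fun hmem => absurd hmem.2 (not_le.mpr hgt)) f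
        rw [hLx]
        have h1 : ∀ᶠ n in atTop, ψn n i - (x - y i) ^ 2 < 0 := by
          have ht : Tendsto (fun n => ψn n i - (x - y i) ^ 2) atTop
              (nhds (ψ i - (x - y i) ^ 2)) := (hcomp i).sub tendsto_const_nhds
          have hneg : ψ i - (x - y i) ^ 2 < 0 := by linarith
          exact ht.eventually (eventually_lt_nhds hneg)
        have heq : (fun _ : ℕ => (0:ℝ)) =ᶠ[atTop] fun n => F n x := by
          filter_upwards [h1] with n hn
          have hmax : max (ψn n i - (x - y i) ^ 2) 0 = 0 := max_eq_right hn.le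
          rw [hF]
          by_cases hx : x ∈ Lag1 y (ψn n) i
          · simp [Set.indicator_of_mem hx, hmax]
          · simp [Set.indicator_of_notMem hx]
        exact tendsto_const_nhds.congr' heq
    · -- case (c)
      have hLx : L x = 0 := Set.indicator_of_notMem (fun hmem => hxL hmem.1) f
      rw [hLx]
      simp only [Lag1, Set.mem_setOf_eq, not_forall, not_le] at hxL
      obtain ⟨j, hj⟩ := hxL
      have ht : Tendsto
          (fun n => ((x - y i) ^ 2 - ψn n i) - ((x - y j) ^ 2 - ψn n j)) atTop
          (nhds (((x - y i) ^ 2 - ψ i) - ((x - y j) ^ 2 - ψ j))) :=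
        (tendsto_const_nhds.sub (hcomp i)).sub (tendsto_const_nhds.sub (hcomp j))
      have hpos : (0:ℝ) < ((x - y i) ^ 2 - ψ i) - ((x - y j) ^ 2 - ψ j) := by linarith
      have h1 : ∀ᶠ n in atTop, 0 < ((x - y i) ^ 2 - ψn n i) - ((x - y j) ^ 2 - ψn n j) :=
        ht.eventually (eventually_gt_nhds hpos)
      have heq : (fun _ : ℕ => (0:ℝ)) =ᶠ[atTop] fun n => F n x := by
        filter_upwards [h1] with n hn
        have hx : x ∉ Lag1 y (ψn n) i := by
          intro hx
          have := hx j
          linarith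
        rw [hF]
        simp [Set.indicator_of_notMem hx]
      exact tendsto_const_nhds.congr' heq
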